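/- For n odd, the family of functions e_I : EVEN_n → ℝ, e_I(x) = ∏_{i∈I} x_i, indexed by subsets I ⊆ [n] with |I| < n/2, forms a basis of the vector space of all real-valued functions on EVEN_n. In particular these functions are linearly independent and span the full function space of dimension 2^{n-1}. -/

import Mathlib

/-- The set `EVEN_n` of `±1` vectors with an even number of `-1`'s. -/
def EvenPt (n : ℕ) : Type :=
  {x : Fin n → ℝ // (∀ i, x i = 1 ∨ x i = -1) ∧ ∏ i, x i = 1}

/-- The monomial function `e_I(x) = ∏_{i ∈ I} x_i` on `EVEN_n`. -/
def evenMonomial (n : ℕ) (I : Finset (Fin n)) : EvenPt n → ℝ :=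
  fun x => ∏ i ∈ I, x.1 i

open Finset in
lemma EvenPt.sq (n : ℕ) (x : EvenPt n) (i : Fin n) : x.1 i * x.1 i = 1 := by
  rcases x.2.1 i with h | h <;> rw [h] <;> norm_num

noncomputable def EvenPt.toSet {n : ℕ} (x : EvenPt n) : Finset (Fin n) :=
  Finset.univ.filter (fun i => x.1 i = -1)

lemma EvenPt.toSet_injective (n : ℕ) : Function.Injective (EvenPt.toSet (n := n)) := by
  classical
  intro x y h
  apply Subtype.ext; funext i
  have hx := x.2.1 i; have hy := y.2.1 i
  have : (x.1 i = -1) ↔ (y.1 i = -1) := by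
    constructor <;> intro hi
    · have : i ∈ EvenPt.toSet x := by simp [EvenPt.toSet, hi]
      rw [h] at this; simpa [EvenPt.toSet] using this
    · have : i ∈ EvenPt.toSet y := by simp [EvenPt.toSet, hi]
      rw [← h] at this; simpa [EvenPt.toSet] using this
  rcases hx with hx | hx <;> rcases hy with hy | hy <;> rw [hx, hy] at this ⊢ <;> norm_num at this

noncomputable instance (n : ℕ) : Fintype (EvenPt n) :=
  Fintype.ofInjective _ (EvenPt.toSet_injective n)

lemma EvenPt.prod_eq_pow {n : ℕ} (x : EvenPt n) :
    (∏ i, x.1 i) = (-1 : ℝ) ^ (EvenPt.toSet x).card := by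
  classical
  rw [← Finset.prod_filter_mul_prod_filter_not Finset.univ (fun i => x.1 i = -1)]
  have h1 : ∏ i ∈ Finset.univ.filter (fun i => x.1 i = -1), x.1 i
      = (-1 : ℝ) ^ (EvenPt.toSet x).card := by
    rw [EvenPt.toSet, ← Finset.prod_const]
    exact Finset.prod_congr rfl (fun i hi => by simpa using (Finset.mem_filter.1 hi).2)
  have h2 : ∏ i ∈ Finset.univ.filter (fun i => ¬ x.1 i = -1), x.1 i = 1 := by
    apply Finset.prod_eq_one
    intro i hi
    rcases x.2.1 i with h | h
    · exact h
    · exact absurd h (Finset.mem_filter.1 hi).2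
  rw [h1, h2, mul_one]

lemma EvenPt.even_card_toSet {n : ℕ} (x : EvenPt n) : Even (EvenPt.toSet x).card := by
  have := x.2.2
  rw [EvenPt.prod_eq_pow] at this
  exact (neg_one_pow_eq_one_iff_even (by norm_num : (-1 : ℝ) ≠ 1)).1 this

noncomputable def EvenPt.equivEven (n : ℕ) :
    EvenPt n ≃ {S : Finset (Fin n) // Even S.card} where
  toFun x := ⟨EvenPt.toSet x, EvenPt.even_card_toSet x⟩
  invFun S := ⟨fun i => if i ∈ S.1 then -1 else 1,
    ⟨fun i => by by_cases h : i ∈ S.1 <;> simp [h] <;> norm_num, by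
      classical
      rw [Finset.prod_ite_mem, Finset.univ_inter, Finset.prod_const]
      exact Even.neg_one_pow S.2⟩⟩
  left_inv x := by
    apply Subtype.ext; funext i
    by_cases h : i ∈ EvenPt.toSet x
    · simp only [h, if_true]
      exact ((Finset.mem_filter.1 h).2).symm ▸ rfl
    · simp only [h, if_false]
      rcases x.2.1 i with h1 | h1
      · exact h1.symm
      · exact absurd (by simp [EvenPt.toSet, h1]) h
  right_inv S := by
    apply Subtype.ext
    ext i
    simp only [EvenPt.toSet, Finset.mem_filter, Finset.mem_univ, true_and]
    by_cases h : i ∈ S.1 <;> simp [h] <;> norm_num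

lemma card_half {n : ℕ} (hn : Odd n) (p : Finset (Fin n) → Prop) [DecidablePred p]
    (hc : ∀ S, p S ↔ ¬ p Sᶜ) :
    Fintype.card {S : Finset (Fin n) // p S} = 2 ^ (n - 1) := by
  classical
  have he : Fintype.card {S : Finset (Fin n) // p S}
      = Fintype.card {S : Finset (Fin n) // ¬ p S} := by
    apply Fintype.card_congr
    exact ⟨fun S => ⟨S.1ᶜ, (hc S.1).1 S.2⟩,
      fun S => ⟨S.1ᶜ, (hc S.1ᶜ).2 (by rw [compl_compl]; exact S.2)⟩,
      fun S => by simp, fun S => by simp⟩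
  have hcc : Fintype.card {S : Finset (Fin n) // ¬ p S}
      = Fintype.card (Finset (Fin n)) - Fintype.card {S : Finset (Fin n) // p S} :=
    Fintype.card_subtype_compl p
  have hle : Fintype.card {S : Finset (Fin n) // p S} ≤ Fintype.card (Finset (Fin n)) :=
    Fintype.card_subtype_le p
  have hcard : Fintype.card (Finset (Fin n)) = 2 ^ n := by simp
  obtain ⟨k, hk⟩ := hn
  have h2 : 2 ^ n = 2 * 2 ^ (n - 1) := by
    rw [hk, Nat.add_sub_cancel, pow_succ]; ring
  omega

lemma card_evenPt {n : ℕ} (hn : Odd n) : Fintype.card (EvenPt n) = 2 ^ (n - 1) := by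
  classical
  rw [Fintype.card_congr (EvenPt.equivEven n)]
  apply card_half hn
  intro S
  have hle : S.card ≤ n := by simpa using Finset.card_le_univ S
  rw [Finset.card_compl, Fintype.card_fin, Nat.even_sub hle]
  have h : ¬ Even n := Nat.not_even_iff_odd.mpr hn
  tauto

lemma card_index {n : ℕ} (hn : Odd n) :
    Fintype.card {I : Finset (Fin n) // 2 * I.card < n} = 2 ^ (n - 1) := by
  classical
  apply card_half hn
  intro S
  have hle : S.card ≤ n := by simpa using Finset.card_le_univ S
  rw [Finset.card_compl, Fintype.card_fin]
  obtain ⟨k, hk⟩ := hn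
  omega

open scoped Classical in
lemma key_sum {n : ℕ} (hn : Odd n) (x y : EvenPt n) :
    ∑ I : {I : Finset (Fin n) // 2 * I.card < n},
        (evenMonomial n I.1 x) * (evenMonomial n I.1 y)
      = if x = y then (2 : ℝ) ^ (n - 1) else 0 := by
  classical
  set z : Fin n → ℝ := fun i => x.1 i * y.1 i with hz
  have hz1 : ∀ i, z i = 1 ∨ z i = -1 := by
    intro i
    rcases x.2.1 i with h1 | h1 <;> rcases y.2.1 i with h2 | h2 <;>
      simp [hz, h1, h2]
  have hzsq : ∀ i, z i * z i = 1 := by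
    intro i; rcases hz1 i with h | h <;> rw [h] <;> norm_num
  have hzuniv : ∏ i, z i = 1 := by
    simp only [hz]
    rw [Finset.prod_mul_distrib, x.2.2, y.2.2, mul_one]
  -- each monomial product is ∏ z over I
  have hmon : ∀ I : Finset (Fin n),
      (evenMonomial n I x) * (evenMonomial n I y) = ∏ i ∈ I, z i := by
    intro I; rw [evenMonomial, evenMonomial, ← Finset.prod_mul_distrib]
  -- total sum over all subsets
  have htotal : ∑ I : Finset (Fin n), ∏ i ∈ I, z i
      = if x = y then (2 : ℝ) ^ n else 0 := by
    have h1 : ∑ I : Finset (Fin n), ∏ i ∈ I, z i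
        = ∏ i, (z i + 1) := by
      rw [Finset.prod_add]
      rw [← Finset.powerset_univ]
      exact Finset.sum_congr rfl (fun t _ => by simp)
    rw [h1]
    by_cases hxy : x = y
    · subst hxy
      rw [if_pos rfl]
      have h2 : ∀ i ∈ Finset.univ, z i + 1 = 2 := by
        intro i _
        have hsq : z i = 1 := EvenPt.sq n x i
        rw [hsq]; norm_num
      rw [Finset.prod_congr rfl h2, Finset.prod_const]
      simp
    · rw [if_neg hxy]
      have : ∃ i, x.1 i ≠ y.1 i := by
        by_contra h
        push_neg at h
        exact hxy (Subtype.ext (funext h))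
      obtain ⟨i, hi⟩ := this
      apply Finset.prod_eq_zero (Finset.mem_univ i)
      have : z i = -1 := by
        rcases x.2.1 i with h1 | h1 <;> rcases y.2.1 i with h2 | h2 <;>
          simp [hz, h1, h2] <;> exact absurd (h1.trans h2.symm) hi
      rw [this]; ring
  -- product over complement equals product over I
  have hcompl : ∀ I : Finset (Fin n), ∏ i ∈ Iᶜ, z i = ∏ i ∈ I, z i := by
    intro I
    have hab : (∏ i ∈ I, z i) * ∏ i ∈ Iᶜ, z i = 1 := by
      rw [Finset.prod_mul_prod_compl]; exact hzuniv
    have haa : (∏ i ∈ I, z i) * ∏ i ∈ I, z i = 1 := by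
      rw [← Finset.prod_mul_distrib]
      exact Finset.prod_eq_one (fun i _ => hzsq i)
    have hne : (∏ i ∈ I, z i) ≠ 0 := by
      intro h; rw [h, zero_mul] at haa; exact zero_ne_one haa
    exact mul_left_cancel₀ hne (hab.trans haa.symm)
  -- split the total sum
  have hsplit : ∑ I : Finset (Fin n), ∏ i ∈ I, z i
      = (∑ I ∈ Finset.univ.filter (fun I : Finset (Fin n) => 2 * I.card < n), ∏ i ∈ I, z i)
      + ∑ I ∈ Finset.univ.filter (fun I : Finset (Fin n) => ¬ 2 * I.card < n), ∏ i ∈ I, z i :=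
    (Finset.sum_filter_add_sum_filter_not _ _ _).symm
  have hbij : ∑ I ∈ Finset.univ.filter (fun I : Finset (Fin n) => ¬ 2 * I.card < n), ∏ i ∈ I, z i
      = ∑ I ∈ Finset.univ.filter (fun I : Finset (Fin n) => 2 * I.card < n), ∏ i ∈ I, z i := by
    obtain ⟨k, hk⟩ := hn
    apply Finset.sum_nbij' (fun I => Iᶜ) (fun I => Iᶜ)
    · intro I hI
      simp only [Finset.mem_filter, Finset.mem_univ, true_and] at hI ⊢
      have hle : I.card ≤ n := by simpa using Finset.card_le_univ I
      rw [Finset.card_compl, Fintype.card_fin]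
      omega
    · intro I hI
      simp only [Finset.mem_filter, Finset.mem_univ, true_and] at hI ⊢
      have hle : I.card ≤ n := by simpa using Finset.card_le_univ I
      rw [Finset.card_compl, Fintype.card_fin]
      omega
    · intro I _; simp
    · intro I _; simp
    · intro I _; exact (hcompl I).symm
  have hsub : ∑ I : {I : Finset (Fin n) // 2 * I.card < n},
      (evenMonomial n I.1 x) * (evenMonomial n I.1 y)
      = ∑ I ∈ Finset.univ.filter (fun I : Finset (Fin n) => 2 * I.card < n), ∏ i ∈ I, z i := by
    calc ∑ I : {I : Finset (Fin n) // 2 * I.card < n},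
            (evenMonomial n I.1 x) * (evenMonomial n I.1 y)
        = ∑ I : {I : Finset (Fin n) // 2 * I.card < n}, ∏ i ∈ I.1, z i :=
          Finset.sum_congr rfl (fun I _ => hmon I.1)
      _ = ∑ I ∈ Finset.univ.filter (fun I : Finset (Fin n) => 2 * I.card < n), ∏ i ∈ I, z i :=
          (Finset.sum_subtype (p := fun I : Finset (Fin n) => 2 * I.card < n) (Finset.univ.filter (fun I : Finset (Fin n) => 2 * I.card < n)) (fun I => by simp) (fun I => ∏ i ∈ I, z i)).symm
  rw [hsub]
  have h2 : (2 : ℝ) ^ n = 2 * 2 ^ (n - 1) := by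
    obtain ⟨k, hk⟩ := hn
    rw [hk, Nat.add_sub_cancel, pow_succ]; ring
  have := htotal
  rw [hsplit, hbij] at this
  by_cases hxy : x = y
  · rw [if_pos hxy] at this ⊢; linarith
  · rw [if_neg hxy] at this ⊢; linarith

/-- For `n` odd, the monomials `e_I` with `|I| < n/2` form a basis of the space of
real-valued functions on `EVEN_n`: they are linearly independent and they span. -/
theorem even_monomials_basis_of_odd (n : ℕ) (hn : Odd n) :
    LinearIndependent ℝ
        (fun I : {I : Finset (Fin n) // 2 * I.card < n} => evenMonomial n I.1) ∧
      Submodule.span ℝ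
          (Set.range fun I : {I : Finset (Fin n) // 2 * I.card < n} =>
            evenMonomial n I.1) = ⊤ := by
  classical
  have hspan : Submodule.span ℝ
      (Set.range fun I : {I : Finset (Fin n) // 2 * I.card < n} =>
        evenMonomial n I.1) = ⊤ := by
    rw [eq_top_iff]
    intro f _
    have hdelta : ∀ x : EvenPt n,
        (fun y : EvenPt n => if x = y then (1 : ℝ) else 0) ∈ Submodule.span ℝ
          (Set.range fun I : {I : Finset (Fin n) // 2 * I.card < n} =>
            evenMonomial n I.1) := by
      intro x
      have hrepr : (fun y : EvenPt n => if x = y then (1 : ℝ) else 0)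
          = ((2 : ℝ) ^ (n - 1))⁻¹ • ∑ I : {I : Finset (Fin n) // 2 * I.card < n},
              (evenMonomial n I.1 x) • evenMonomial n I.1 := by
        funext y
        have hk := key_sum hn x y
        have hev : (∑ I : {I : Finset (Fin n) // 2 * I.card < n},
            (evenMonomial n I.1 x) • evenMonomial n I.1) y
            = ∑ I : {I : Finset (Fin n) // 2 * I.card < n},
              evenMonomial n I.1 x * evenMonomial n I.1 y := by
          simp [Finset.sum_apply]
        rw [Pi.smul_apply, hev, hk, smul_eq_mul]
        by_cases hxy : x = y
        · rw [if_pos hxy, if_pos hxy, inv_mul_cancel₀ (pow_ne_zero _ two_ne_zero)]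
        · rw [if_neg hxy, if_neg hxy, mul_zero]
      rw [hrepr]
      exact Submodule.smul_mem _ _ (Submodule.sum_mem _ (fun I _ =>
        Submodule.smul_mem _ _ (Submodule.subset_span ⟨I, rfl⟩)))
    have hf : f = ∑ x : EvenPt n, f x • (fun y => if x = y then (1 : ℝ) else 0) := by
      funext y
      rw [Finset.sum_apply]
      simp only [Pi.smul_apply, smul_eq_mul, mul_ite, mul_one, mul_zero]
      simp
    rw [hf]
    exact Submodule.sum_mem _ (fun x _ => Submodule.smul_mem _ _ (hdelta x))
  refine ⟨?_, hspan⟩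
  apply linearIndependent_of_top_le_span_of_card_eq_finrank hspan.ge
  rw [card_index hn, Module.finrank_pi, card_evenPt hn]
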